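/- Let (k_j)_{j≥1} be a sequence of even natural numbers with k_1 ≥ 6 and k_{j+1} - k_j ≥ 6 for all j. Define a_0 = a_1 = 1, a_k = 2 if k = k_j - 1 or k = k_j + 1 for some j, and a_k = 4 otherwise. Then for the convergents s_k/t_k of [a_0,a_1,a_2,...], all denominators t_k are odd and the Jacobi symbol (s_k/t_k) equals 1 for every k ≥ 0. -/

import Mathlib

/-- Numerators of continued fraction convergents: `cfS a k = s_k`
(with `s_{-1} = 1`, `s_0 = a_0`, `s_k = a_k s_{k-1} + s_{k-2}`). -/
def cfS (a : ℕ → ℤ) : ℕ → ℤ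
  | 0 => a 0
  | 1 => a 1 * a 0 + 1
  | (k+2) => a (k+2) * cfS a (k+1) + cfS a k

/-- Denominators of continued fraction convergents: `cfT a k = t_k`
(with `t_{-1} = 0`, `t_0 = 1`, `t_k = a_k t_{k-1} + t_{k-2}`). -/
def cfT (a : ℕ → ℤ) : ℕ → ℤ
  | 0 => 1
  | 1 => a 1
  | (k+2) => a (k+2) * cfT a (k+1) + cfT a k

theorem jacobi_sequence_all_one_construction
    (kseq : ℕ → ℕ) (heven : ∀ j, 1 ≤ j → Even (kseq j)) (h1 : 6 ≤ kseq 1)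
    (hgap : ∀ j, 1 ≤ j → kseq j + 6 ≤ kseq (j+1))
    (a : ℕ → ℤ) (ha0 : a 0 = 1) (ha1 : a 1 = 1)
    (ha2 : ∀ n, 2 ≤ n → (∃ j, 1 ≤ j ∧ (n = kseq j - 1 ∨ n = kseq j + 1)) → a n = 2)
    (ha4 : ∀ n, 2 ≤ n → ¬(∃ j, 1 ≤ j ∧ (n = kseq j - 1 ∨ n = kseq j + 1)) → a n = 4) :
    ∀ n, Odd (cfT a n) ∧ jacobiSym (cfS a n) (cfT a n).natAbs = 1 := by
  classical
  -- basic facts about kseq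
  have hk6 : ∀ j, 1 ≤ j → 6 ≤ kseq j := by
    intro j hj
    induction j with
    | zero => omega
    | succ j ih =>
      rcases Nat.lt_or_ge j 1 with h | h
      · have : j = 0 := by omega
        subst this; exact h1
      · have h2 := hgap j h
        have h3 := ih h
        omega
  have hmono : ∀ j i, 1 ≤ i → i < j → kseq i + 6 ≤ kseq j := by
    intro j
    induction j with
    | zero => intro i hi h; omega
    | succ j ih =>
      intro i hi h
      rcases Nat.lt_succ_iff_lt_or_eq.mp h with h' | h'
      · have h2 := ih i hi h'
        have h3 := hgap j (by omega)
        omega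
      · subst h'; exact hgap i hi
  have hsep : ∀ j j', 1 ≤ j → 1 ≤ j' →
      kseq j = kseq j' ∨ kseq j + 6 ≤ kseq j' ∨ kseq j' + 6 ≤ kseq j := by
    intro j j' hj hj'
    rcases lt_trichotomy j j' with h | h | h
    · exact Or.inr (Or.inl (hmono j' j hj h))
    · exact Or.inl (by rw [h])
    · exact Or.inr (Or.inr (hmono j j' hj' h))
  have hapos : ∀ n, 0 < a n := by
    intro n
    match n with
    | 0 => rw [ha0]; norm_num
    | 1 => rw [ha1]; norm_num
    | (m+2) =>
      by_cases h : (∃ j, 1 ≤ j ∧ (m+2 = kseq j - 1 ∨ m+2 = kseq j + 1))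
      · rw [ha2 _ (by omega) h]; norm_num
      · rw [ha4 _ (by omega) h]; norm_num
  -- the main invariant
  have key : ∀ n,
      (0 < cfT a n ∧ ((∃ j, 1 ≤ j ∧ n = kseq j - 1) → cfT a n % 4 = 3)
        ∧ (¬(∃ j, 1 ≤ j ∧ n = kseq j - 1) → cfT a n % 4 = 1))
      ∧ (0 < cfT a (n+1) ∧ ((∃ j, 1 ≤ j ∧ n+1 = kseq j - 1) → cfT a (n+1) % 4 = 3)
        ∧ (¬(∃ j, 1 ≤ j ∧ n+1 = kseq j - 1) → cfT a (n+1) % 4 = 1))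
      ∧ jacobiSym (cfT a n) (cfT a (n+1)).natAbs = 1 := by
    intro n
    induction n with
    | zero =>
      have ht0 : cfT a 0 = 1 := rfl
      have ht1 : cfT a 1 = 1 := by show a 1 = 1; exact ha1
      have hn0 : ¬(∃ j, 1 ≤ j ∧ 0 = kseq j - 1) := by
        rintro ⟨j, hj, e⟩; have := hk6 j hj; omega
      have hn1 : ¬(∃ j, 1 ≤ j ∧ 0+1 = kseq j - 1) := by
        rintro ⟨j, hj, e⟩; have := hk6 j hj; omega
      refine ⟨⟨by rw [ht0]; norm_num, fun h => absurd h hn0, fun _ => by rw [ht0]; norm_num⟩,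
        ⟨by rw [ht1]; norm_num, fun h => absurd h hn1, fun _ => by rw [ht1]; norm_num⟩, ?_⟩
      rw [ht0, ht1]; simp
    | succ n ih =>
      obtain ⟨⟨hp0, hA0, hN0⟩, ⟨hp1, hA1, hN1⟩, hQ⟩ := ih
      have hT2 : cfT a (n+2) = a (n+2) * cfT a (n+1) + cfT a n := rfl
      have hp2 : 0 < cfT a (n+2) := by
        rw [hT2]
        have := mul_pos (hapos (n+2)) hp1
        linarith
      have e1 : ((cfT a (n+1)).natAbs : ℤ) = cfT a (n+1) := Int.natAbs_of_nonneg hp1.le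
      have e2 : ((cfT a (n+2)).natAbs : ℤ) = cfT a (n+2) := Int.natAbs_of_nonneg hp2.le
      have hmod : cfT a (n+2) % ((cfT a (n+1)).natAbs : ℤ)
          = cfT a n % ((cfT a (n+1)).natAbs : ℤ) := by
        rw [hT2, e1, add_comm]
        exact Int.add_mul_emod_self_right _ _ _
      have bridge : (cfT a (n+1) % 4 = 1 ∨ cfT a (n+1) % 4 = 3) →
          (cfT a (n+2) % 4 = 1 ∨ cfT a (n+2) % 4 = 3) →
          (cfT a (n+1) % 4 = 1 ∨ cfT a (n+2) % 4 = 1) →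
          jacobiSym (cfT a (n+1)) (cfT a (n+2)).natAbs = 1 := by
        intro hx1 hx2 hx3
        have hodd1 : Odd (cfT a (n+1)).natAbs := Nat.odd_iff.mpr (by omega)
        have hodd2 : Odd (cfT a (n+2)).natAbs := Nat.odd_iff.mpr (by omega)
        rcases hx3 with hm | hm
        · have hm' : (cfT a (n+1)).natAbs % 4 = 1 := by omega
          rw [← e1, jacobiSym.quadratic_reciprocity_one_mod_four hm' hodd2, e2,
            jacobiSym.mod_left' hmod]
          exact hQ
        · have hm' : (cfT a (n+2)).natAbs % 4 = 1 := by omega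
          rw [← e1, jacobiSym.quadratic_reciprocity_one_mod_four' hodd1 hm', e2,
            jacobiSym.mod_left' hmod]
          exact hQ
      by_cases hsp : ∃ j, 1 ≤ j ∧ (n+2 = kseq j - 1 ∨ n+2 = kseq j + 1)
      · have ha' : a (n+2) = 2 := ha2 _ (by omega) hsp
        obtain ⟨j, hj, hor⟩ := hsp
        have h6 := hk6 j hj
        obtain ⟨c, hc⟩ := heven j hj
        rcases hor with he | he
        · -- n+2 = kseq j - 1
          have hnA1 : ¬(∃ j', 1 ≤ j' ∧ n+1 = kseq j' - 1) := by
            rintro ⟨j', hj', e⟩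
            have h6' := hk6 j' hj'
            rcases hsep j j' hj hj' with h | h | h <;> omega
          have hnA0 : ¬(∃ j', 1 ≤ j' ∧ n = kseq j' - 1) := by
            rintro ⟨j', hj', e⟩
            have h6' := hk6 j' hj'
            rcases hsep j j' hj hj' with h | h | h <;> omega
          have h1' := hN1 hnA1
          have h0' := hN0 hnA0
          have h2' : cfT a (n+2) % 4 = 3 := by rw [hT2, ha']; omega
          exact ⟨⟨hp1, hA1, hN1⟩, ⟨hp2, fun _ => h2', fun h => absurd ⟨j, hj, he⟩ h⟩,
            bridge (Or.inl h1') (Or.inr h2') (Or.inl h1')⟩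
        · -- n+2 = kseq j + 1
          have hA0' : cfT a n % 4 = 3 := hA0 ⟨j, hj, by omega⟩
          have hnA1 : ¬(∃ j', 1 ≤ j' ∧ n+1 = kseq j' - 1) := by
            rintro ⟨j', hj', e⟩
            have h6' := hk6 j' hj'
            obtain ⟨c', hc'⟩ := heven j' hj'
            omega
          have hnA2 : ¬(∃ j', 1 ≤ j' ∧ n+2 = kseq j' - 1) := by
            rintro ⟨j', hj', e⟩
            have h6' := hk6 j' hj'
            rcases hsep j j' hj hj' with h | h | h <;> omega
          have h1' := hN1 hnA1
          have h2' : cfT a (n+2) % 4 = 1 := by rw [hT2, ha']; omega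
          exact ⟨⟨hp1, hA1, hN1⟩, ⟨hp2, fun h => absurd h hnA2, fun _ => h2'⟩,
            bridge (Or.inl h1') (Or.inl h2') (Or.inl h1')⟩
      · have ha' : a (n+2) = 4 := ha4 _ (by omega) hsp
        have hnA2 : ¬(∃ j', 1 ≤ j' ∧ n+2 = kseq j' - 1) := by
          rintro ⟨j', hj', e⟩
          exact hsp ⟨j', hj', Or.inl e⟩
        have hnA0 : ¬(∃ j', 1 ≤ j' ∧ n = kseq j' - 1) := by
          rintro ⟨j', hj', e⟩
          have := hk6 j' hj'
          exact hsp ⟨j', hj', Or.inr (by omega)⟩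
        have h0' := hN0 hnA0
        have h2' : cfT a (n+2) % 4 = 1 := by rw [hT2, ha']; omega
        have h1or : cfT a (n+1) % 4 = 1 ∨ cfT a (n+1) % 4 = 3 := by
          by_cases h : ∃ j', 1 ≤ j' ∧ n+1 = kseq j' - 1
          · exact Or.inr (hA1 h)
          · exact Or.inl (hN1 h)
        exact ⟨⟨hp1, hA1, hN1⟩, ⟨hp2, fun h => absurd h hnA2, fun _ => h2'⟩,
          bridge h1or (Or.inl h2') (Or.inr h2')⟩
  -- determinant identity
  have det : ∀ n, cfS a (n+1) * cfT a n - cfT a (n+1) * cfS a n = (-1 : ℤ)^n := by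
    intro n
    induction n with
    | zero =>
      show (a 1 * a 0 + 1) * 1 - a 1 * a 0 = 1
      ring
    | succ n ih =>
      have hS : cfS a (n+2) = a (n+2) * cfS a (n+1) + cfS a n := rfl
      have hT : cfT a (n+2) = a (n+2) * cfT a (n+1) + cfT a n := rfl
      rw [hS, hT, pow_succ]
      linear_combination (-1 : ℤ) * ih
  intro n
  -- oddness
  have hmod4 : cfT a n % 4 = 1 ∨ cfT a n % 4 = 3 := by
    obtain ⟨⟨hp0, hA0, hN0⟩, _, _⟩ := key n
    by_cases h : ∃ j, 1 ≤ j ∧ n = kseq j - 1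
    · exact Or.inr (hA0 h)
    · exact Or.inl (hN0 h)
  refine ⟨Int.odd_iff.mpr (by omega), ?_⟩
  match n with
  | 0 =>
    show jacobiSym (a 0) (cfT a 0).natAbs = 1
    rw [ha0]
    simp [cfT]
  | (m+1) =>
    obtain ⟨⟨hpm, _, _⟩, ⟨hp1, hA1, hN1⟩, hQ⟩ := key m
    have e1 : ((cfT a (m+1)).natAbs : ℤ) = cfT a (m+1) := Int.natAbs_of_nonneg hp1.le
    have hdet := det m
    have hre : cfS a (m+1) * cfT a m = (-1:ℤ)^m + cfT a (m+1) * cfS a m := by linarith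
    have hmod2 : (cfS a (m+1) * cfT a m) % ((cfT a (m+1)).natAbs : ℤ)
        = ((-1:ℤ)^m) % ((cfT a (m+1)).natAbs : ℤ) := by
      rw [hre, e1]
      apply Int.add_mul_emod_self_left
    have step1 := jacobiSym.mod_left' hmod2
    rw [jacobiSym.mul_left, hQ, mul_one] at step1
    rw [step1]
    rcases Nat.even_or_odd m with hm | hm
    · rw [hm.neg_one_pow]
      simp
    · rw [hm.neg_one_pow]
      have hoddM : Odd (cfT a (m+1)).natAbs := by
        rcases hmod4 with h | h <;> exact Nat.odd_iff.mpr (by omega)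
      rw [jacobiSym.at_neg_one hoddM]
      have hnA : ¬(∃ j, 1 ≤ j ∧ m+1 = kseq j - 1) := by
        rintro ⟨j, hj, e⟩
        have := hk6 j hj
        obtain ⟨c, hc⟩ := heven j hj
        obtain ⟨d, hd⟩ := hm
        omega
      have h4 : (cfT a (m+1)).natAbs % 4 = 1 := by
        have := hN1 hnA
        omega
      exact ZMod.χ₄_nat_one_mod_four h4
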